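/- Let h ∈ L¹(a,b) with h > 0 a.e. on (a,b). For every measurable J ⊆ (a,b) with m(J) > 0, there is a measurable J₀ ⊆ J with m(J \ J₀) = 0 such that for all τ₀ ∈ J₀: lim_{t→τ₀⁺} (∫_{[τ₀,t]∩J} h ds)/(∫_{τ₀}^{t} h ds) = 1 and lim_{t→τ₀⁻} (∫_{[t,τ₀]∩J} h ds)/(∫_{t}^{τ₀} h ds) = 1. -/

import Mathlib

open Set Filter MeasureTheory intervalIntegral

lemma aux_right13 (f : ℝ → ℝ) (hf : Integrable f) (τ₀ : ℝ)
    (hA : Tendsto (fun t => ⨍ y in Icc τ₀ t, ‖f y - f τ₀‖) (nhdsWithin τ₀ (Ioi τ₀)) (nhds 0)) :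
    Tendsto (fun t => (∫ s in Icc τ₀ t, f s) / (t - τ₀)) (nhdsWithin τ₀ (Ioi τ₀))
      (nhds (f τ₀)) := by
  rw [tendsto_iff_norm_sub_tendsto_zero]
  apply squeeze_zero' _ _ hA
  · filter_upwards with t using norm_nonneg _
  · filter_upwards [self_mem_nhdsWithin] with t ht
    have htr : (0:ℝ) < t - τ₀ := by simpa using mem_Ioi.1 ht
    have hconst : IntegrableOn (fun _ => f τ₀) (Icc τ₀ t) :=
      integrableOn_const measure_Icc_lt_top.ne enorm_ne_top
    have e0 : ∫ s in Icc τ₀ t, (fun _ => f τ₀) s = (t - τ₀) * f τ₀ := by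
      rw [setIntegral_const (f τ₀), Real.volume_real_Icc, max_eq_left htr.le, smul_eq_mul]
    have e1 : (∫ s in Icc τ₀ t, f s) - (t - τ₀) * f τ₀ = ∫ s in Icc τ₀ t, (f s - f τ₀) := by
      rw [integral_sub hf.integrableOn hconst, ← e0]
    have e2 : (∫ s in Icc τ₀ t, f s) / (t - τ₀) - f τ₀
        = (∫ s in Icc τ₀ t, (f s - f τ₀)) / (t - τ₀) := by
      rw [← e1]; field_simp
    have e3 : ‖∫ s in Icc τ₀ t, (f s - f τ₀)‖ ≤ ∫ y in Icc τ₀ t, ‖f y - f τ₀‖ :=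
      MeasureTheory.norm_integral_le_integral_norm _
    have e4 : ⨍ y in Icc τ₀ t, ‖f y - f τ₀‖ = (∫ y in Icc τ₀ t, ‖f y - f τ₀‖) / (t - τ₀) := by
      rw [setAverage_eq, Real.volume_real_Icc, smul_eq_mul, max_eq_left htr.le,
        div_eq_inv_mul]
    rw [e2, e4, norm_div, Real.norm_of_nonneg htr.le]
    exact (div_le_div_iff_of_pos_right htr).mpr e3

lemma aux_left13 (f : ℝ → ℝ) (hf : Integrable f) (τ₀ : ℝ)
    (hA : Tendsto (fun t => ⨍ y in Icc t τ₀, ‖f y - f τ₀‖) (nhdsWithin τ₀ (Iio τ₀)) (nhds 0)) :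
    Tendsto (fun t => (∫ s in Icc t τ₀, f s) / (τ₀ - t)) (nhdsWithin τ₀ (Iio τ₀))
      (nhds (f τ₀)) := by
  rw [tendsto_iff_norm_sub_tendsto_zero]
  apply squeeze_zero' _ _ hA
  · filter_upwards with t using norm_nonneg _
  · filter_upwards [self_mem_nhdsWithin] with t ht
    have htr : (0:ℝ) < τ₀ - t := by simpa using mem_Iio.1 ht
    have hconst : IntegrableOn (fun _ => f τ₀) (Icc t τ₀) :=
      integrableOn_const measure_Icc_lt_top.ne enorm_ne_top
    have e0 : ∫ s in Icc t τ₀, (fun _ => f τ₀) s = (τ₀ - t) * f τ₀ := by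
      rw [setIntegral_const (f τ₀), Real.volume_real_Icc, max_eq_left htr.le, smul_eq_mul]
    have e1 : (∫ s in Icc t τ₀, f s) - (τ₀ - t) * f τ₀ = ∫ s in Icc t τ₀, (f s - f τ₀) := by
      rw [integral_sub hf.integrableOn hconst, ← e0]
    have e2 : (∫ s in Icc t τ₀, f s) / (τ₀ - t) - f τ₀
        = (∫ s in Icc t τ₀, (f s - f τ₀)) / (τ₀ - t) := by
      rw [← e1]; field_simp
    have e3 : ‖∫ s in Icc t τ₀, (f s - f τ₀)‖ ≤ ∫ y in Icc t τ₀, ‖f y - f τ₀‖ :=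
      MeasureTheory.norm_integral_le_integral_norm _
    have e4 : ⨍ y in Icc t τ₀, ‖f y - f τ₀‖ = (∫ y in Icc t τ₀, ‖f y - f τ₀‖) / (τ₀ - t) := by
      rw [setAverage_eq, Real.volume_real_Icc, smul_eq_mul, max_eq_left htr.le,
        div_eq_inv_mul]
    rw [e2, e4, norm_div, Real.norm_of_nonneg htr.le]
    exact (div_le_div_iff_of_pos_right htr).mpr e3

lemma aux_divdiv13 (A B r : ℝ) (hr : r ≠ 0) : A / r / (B / r) = A / B := by
  rcases eq_or_ne B 0 with hB | hB
  · simp [hB]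
  · field_simp

theorem stmt13 (a b : ℝ) (hab : a < b) (h : ℝ → ℝ)
    (hh : IntegrableOn h (Ioo a b))
    (hh0 : ∀ᵐ s ∂volume.restrict (Ioo a b), 0 < h s)
    (J : Set ℝ) (hJ : MeasurableSet J) (hJsub : J ⊆ Ioo a b)
    (hJpos : 0 < volume J) :
    ∃ J₀ ⊆ J, MeasurableSet J₀ ∧ volume (J \ J₀) = 0 ∧
      ∀ τ₀ ∈ J₀,
        Tendsto (fun t => (∫ s in Icc τ₀ t ∩ J, h s) / ∫ s in τ₀..t, h s)
          (nhdsWithin τ₀ (Ioi τ₀)) (nhds 1) ∧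
        Tendsto (fun t => (∫ s in Icc t τ₀ ∩ J, h s) / ∫ s in t..τ₀, h s)
          (nhdsWithin τ₀ (Iio τ₀)) (nhds 1) := by
  classical
  set g : ℝ → ℝ := (Ioo a b).indicator h with hgdef
  set f : ℝ → ℝ := (Ioo a b \ J).indicator h with hfdef
  have hg : Integrable g := (integrable_indicator_iff measurableSet_Ioo).2 hh
  have hf : Integrable f := (integrable_indicator_iff (measurableSet_Ioo.diff hJ)).2
    (hh.mono_set diff_subset)
  set v := IsUnifLocDoublingMeasure.vitaliFamily (volume : Measure ℝ) 1 with hvdef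
  have hPf := v.ae_tendsto_average_norm_sub hf.locallyIntegrable
  have hPg := v.ae_tendsto_average_norm_sub hg.locallyIntegrable
  have hh0' : ∀ᵐ x ∂(volume : Measure ℝ), x ∈ Ioo a b → 0 < h x :=
    (ae_restrict_iff' measurableSet_Ioo).1 hh0
  have hN : volume {x | ¬ (Tendsto (fun s => ⨍ y in s, ‖f y - f x‖) (v.filterAt x) (nhds 0)
      ∧ Tendsto (fun s => ⨍ y in s, ‖g y - g x‖) (v.filterAt x) (nhds 0)
      ∧ (x ∈ Ioo a b → 0 < h x))} = 0 :=
    ae_iff.1 (hPf.and (hPg.and hh0'))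
  set N := {x | ¬ (Tendsto (fun s => ⨍ y in s, ‖f y - f x‖) (v.filterAt x) (nhds 0)
      ∧ Tendsto (fun s => ⨍ y in s, ‖g y - g x‖) (v.filterAt x) (nhds 0)
      ∧ (x ∈ Ioo a b → 0 < h x))} with hNdef
  refine ⟨J \ toMeasurable volume N, diff_subset, hJ.diff (measurableSet_toMeasurable _ _),
    ?_, ?_⟩
  · refine measure_mono_null ?_ (by rw [measure_toMeasurable]; exact hN)
    rintro x ⟨hxJ, hx2⟩
    by_contra hxN
    exact hx2 ⟨hxJ, hxN⟩
  · rintro τ₀ ⟨hτJ, hτN⟩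
    have hτgood : τ₀ ∉ N := fun hc => hτN (subset_toMeasurable _ _ hc)
    rw [hNdef, mem_setOf_eq, not_not] at hτgood
    obtain ⟨hPf0, hPg0, hhpos'⟩ := hτgood
    have hτab : τ₀ ∈ Ioo a b := hJsub hτJ
    have hpos : 0 < h τ₀ := hhpos' hτab
    have hfτ : f τ₀ = 0 := indicator_of_notMem (fun hc => hc.2 hτJ) h
    have hgτ : g τ₀ = h τ₀ := indicator_of_mem hτab h
    constructor
    · -- right limit
      have hAf := hPf0.comp (Real.tendsto_Icc_vitaliFamily_right τ₀)
      have hAg := hPg0.comp (Real.tendsto_Icc_vitaliFamily_right τ₀)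
      have h1 : Tendsto (fun t => (∫ s in Icc τ₀ t, f s) / (t - τ₀))
          (nhdsWithin τ₀ (Ioi τ₀)) (nhds 0) := by
        have := aux_right13 f hf τ₀ hAf; rwa [hfτ] at this
      have h2 : Tendsto (fun t => (∫ s in Icc τ₀ t, g s) / (t - τ₀))
          (nhdsWithin τ₀ (Ioi τ₀)) (nhds (h τ₀)) := by
        have := aux_right13 g hg τ₀ hAg; rwa [hgτ] at this
      have h3 : Tendsto (fun t => (∫ s in Icc τ₀ t, f s) / (∫ s in Icc τ₀ t, g s))
          (nhdsWithin τ₀ (Ioi τ₀)) (nhds 0) := by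
        have h3' := h1.div h2 hpos.ne'
        rw [zero_div] at h3'
        apply h3'.congr'
        filter_upwards [self_mem_nhdsWithin] with t ht
        exact aux_divdiv13 _ _ _ (sub_ne_zero.2 (ne_of_gt (mem_Ioi.1 ht)))
      have h4 : Tendsto (fun t => 1 - (∫ s in Icc τ₀ t, f s) / (∫ s in Icc τ₀ t, g s))
          (nhdsWithin τ₀ (Ioi τ₀)) (nhds 1) := by
        simpa using (tendsto_const_nhds (x := (1:ℝ))
          (f := nhdsWithin τ₀ (Ioi τ₀))).sub h3
      have hDpos : ∀ᶠ t in nhdsWithin τ₀ (Ioi τ₀), 0 < ∫ s in Icc τ₀ t, g s := by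
        filter_upwards [h2.eventually (eventually_gt_nhds hpos), self_mem_nhdsWithin]
          with t h2t ht
        have hr : (0:ℝ) < t - τ₀ := sub_pos.2 (mem_Ioi.1 ht)
        have := mul_pos h2t hr
        rwa [div_mul_cancel₀ _ hr.ne'] at this
      apply h4.congr'
      filter_upwards [self_mem_nhdsWithin, eventually_nhdsWithin_of_eventually_nhds
        (eventually_lt_nhds hτab.2), hDpos] with t ht htb hD
      have hτt : τ₀ < t := mem_Ioi.1 ht
      have hsub : Icc τ₀ t ⊆ Ioo a b := fun y hy =>
        ⟨lt_of_lt_of_le hτab.1 hy.1, lt_of_le_of_lt hy.2 htb⟩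
      have hint : IntegrableOn h (Icc τ₀ t) := hh.mono_set hsub
      have eg : ∫ s in Icc τ₀ t, g s = ∫ s in Icc τ₀ t, h s :=
        setIntegral_congr_fun measurableSet_Icc fun y hy => indicator_of_mem (hsub hy) h
      have eD : ∫ s in τ₀..t, h s = ∫ s in Icc τ₀ t, h s := by
        rw [intervalIntegral.integral_of_le hτt.le, ← integral_Icc_eq_integral_Ioc]
      have hseteq : Icc τ₀ t ∩ (Ioo a b \ J) = Icc τ₀ t \ J := by
        ext y
        simp only [mem_inter_iff, mem_diff]
        exact ⟨fun hy => ⟨hy.1, hy.2.2⟩, fun hy => ⟨hy.1, hsub hy.1, hy.2⟩⟩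
      have ef : ∫ s in Icc τ₀ t, f s = ∫ s in Icc τ₀ t \ J, h s := by
        rw [hfdef, setIntegral_indicator (measurableSet_Ioo.diff hJ), hseteq]
      have hsplit : (∫ s in Icc τ₀ t ∩ J, h s) + ∫ s in Icc τ₀ t \ J, h s
          = ∫ s in Icc τ₀ t, h s := by
        have hdisj : Disjoint (Icc τ₀ t ∩ J) (Icc τ₀ t \ J) :=
          disjoint_sdiff_right.mono_left inter_subset_right
        rw [← setIntegral_union hdisj (measurableSet_Icc.diff hJ)
          (hint.mono_set inter_subset_left) (hint.mono_set diff_subset), inter_union_diff]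
      rw [eg] at hD
      have enum : ∫ s in Icc τ₀ t ∩ J, h s
          = (∫ s in Icc τ₀ t, h s) - ∫ s in Icc τ₀ t \ J, h s := by linarith
      rw [eD, eg, ef, enum, sub_div, div_self hD.ne']
    · -- left limit
      have hAf := hPf0.comp (Real.tendsto_Icc_vitaliFamily_left τ₀)
      have hAg := hPg0.comp (Real.tendsto_Icc_vitaliFamily_left τ₀)
      have h1 : Tendsto (fun t => (∫ s in Icc t τ₀, f s) / (τ₀ - t))
          (nhdsWithin τ₀ (Iio τ₀)) (nhds 0) := by
        have := aux_left13 f hf τ₀ hAf; rwa [hfτ] at this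
      have h2 : Tendsto (fun t => (∫ s in Icc t τ₀, g s) / (τ₀ - t))
          (nhdsWithin τ₀ (Iio τ₀)) (nhds (h τ₀)) := by
        have := aux_left13 g hg τ₀ hAg; rwa [hgτ] at this
      have h3 : Tendsto (fun t => (∫ s in Icc t τ₀, f s) / (∫ s in Icc t τ₀, g s))
          (nhdsWithin τ₀ (Iio τ₀)) (nhds 0) := by
        have h3' := h1.div h2 hpos.ne'
        rw [zero_div] at h3'
        apply h3'.congr'
        filter_upwards [self_mem_nhdsWithin] with t ht
        exact aux_divdiv13 _ _ _ (sub_ne_zero.2 (ne_of_gt (mem_Iio.1 ht)))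
      have h4 : Tendsto (fun t => 1 - (∫ s in Icc t τ₀, f s) / (∫ s in Icc t τ₀, g s))
          (nhdsWithin τ₀ (Iio τ₀)) (nhds 1) := by
        simpa using (tendsto_const_nhds (x := (1:ℝ))
          (f := nhdsWithin τ₀ (Iio τ₀))).sub h3
      have hDpos : ∀ᶠ t in nhdsWithin τ₀ (Iio τ₀), 0 < ∫ s in Icc t τ₀, g s := by
        filter_upwards [h2.eventually (eventually_gt_nhds hpos), self_mem_nhdsWithin]
          with t h2t ht
        have hr : (0:ℝ) < τ₀ - t := sub_pos.2 (mem_Iio.1 ht)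
        have := mul_pos h2t hr
        rwa [div_mul_cancel₀ _ hr.ne'] at this
      apply h4.congr'
      filter_upwards [self_mem_nhdsWithin, eventually_nhdsWithin_of_eventually_nhds
        (eventually_gt_nhds hτab.1), hDpos] with t ht hta hD
      have hτt : t < τ₀ := mem_Iio.1 ht
      have hsub : Icc t τ₀ ⊆ Ioo a b := fun y hy =>
        ⟨lt_of_lt_of_le hta hy.1, lt_of_le_of_lt hy.2 hτab.2⟩
      have hint : IntegrableOn h (Icc t τ₀) := hh.mono_set hsub
      have eg : ∫ s in Icc t τ₀, g s = ∫ s in Icc t τ₀, h s :=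
        setIntegral_congr_fun measurableSet_Icc fun y hy => indicator_of_mem (hsub hy) h
      have eD : ∫ s in t..τ₀, h s = ∫ s in Icc t τ₀, h s := by
        rw [intervalIntegral.integral_of_le hτt.le, ← integral_Icc_eq_integral_Ioc]
      have hseteq : Icc t τ₀ ∩ (Ioo a b \ J) = Icc t τ₀ \ J := by
        ext y
        simp only [mem_inter_iff, mem_diff]
        exact ⟨fun hy => ⟨hy.1, hy.2.2⟩, fun hy => ⟨hy.1, hsub hy.1, hy.2⟩⟩
      have ef : ∫ s in Icc t τ₀, f s = ∫ s in Icc t τ₀ \ J, h s := by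
        rw [hfdef, setIntegral_indicator (measurableSet_Ioo.diff hJ), hseteq]
      have hsplit : (∫ s in Icc t τ₀ ∩ J, h s) + ∫ s in Icc t τ₀ \ J, h s
          = ∫ s in Icc t τ₀, h s := by
        have hdisj : Disjoint (Icc t τ₀ ∩ J) (Icc t τ₀ \ J) :=
          disjoint_sdiff_right.mono_left inter_subset_right
        rw [← setIntegral_union hdisj (measurableSet_Icc.diff hJ)
          (hint.mono_set inter_subset_left) (hint.mono_set diff_subset), inter_union_diff]
      rw [eg] at hD
      have enum : ∫ s in Icc t τ₀ ∩ J, h s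
          = (∫ s in Icc t τ₀, h s) - ∫ s in Icc t τ₀ \ J, h s := by linarith
      rw [eD, eg, ef, enum, sub_div, div_self hD.ne']
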